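/- Let (X, ℬ) be a measurable space, κ a sub-Markov transition kernel on X, m a conservative reversible probability measure for κ, and f : X → ℝ a bounded measurable function. Then the following are equivalent: (a) for every bounded measurable g : X → ℝ, T(g·f) = (T g)·f m-almost everywhere; (b) T f = f m-almost everywhere; (c) ∫_X (f − T f)·f dm = 0; (d) f(x₀) = f(x₁) for σ_m-almost every (x₀, x₁) ∈ X × X. -/

import Mathlib

open MeasureTheory ProbabilityTheory

variable {X : Type*} [MeasurableSpace X]

/-- A function is bounded measurable. -/
def BddMeasurable {X : Type*} [MeasurableSpace X] (f : X → ℝ) : Prop :=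
  Measurable f ∧ ∃ C : ℝ, ∀ x, |f x| ≤ C

/-- The transition operator `T f (x) = ∫ f(y) κ(x, dy)`. -/
noncomputable def Tker {X : Type*} [MeasurableSpace X] (κ : Kernel X X) (f : X → ℝ) :
    X → ℝ :=
  fun x => ∫ y, f y ∂(κ x)

/-- `m` is an invariant measure: `∫ T f dm = ∫ f dm` for all bounded measurable `f`. -/
def IsInvariantMeas {X : Type*} [MeasurableSpace X] (κ : Kernel X X) (m : Measure X) : Prop :=
  ∀ f : X → ℝ, BddMeasurable f → ∫ x, Tker κ f x ∂m = ∫ x, f x ∂m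

/-- `m` is a reversible measure: `∫ (T f) g dm = ∫ f (T g) dm`
for all bounded measurable `f, g`. -/
def IsReversibleMeas {X : Type*} [MeasurableSpace X] (κ : Kernel X X) (m : Measure X) : Prop :=
  ∀ f g : X → ℝ, BddMeasurable f → BddMeasurable g →
    ∫ x, Tker κ f x * g x ∂m = ∫ x, f x * Tker κ g x ∂m

/-- `m` is a conservative measure: `∫ (T 1) g dm = ∫ g dm`
for all bounded measurable `g`, where `T 1 (x) = κ(x, X)`. -/
def IsConservativeMeas {X : Type*} [MeasurableSpace X] (κ : Kernel X X) (m : Measure X) :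
    Prop :=
  ∀ g : X → ℝ, BddMeasurable g → ∫ x, (κ x Set.univ).toReal * g x ∂m = ∫ x, g x ∂m

/-- `m` is an extreme element of a set `C` of measures: `m ∈ C` and whenever
`m = (1 - t) • m₀ + t • m₁` with `t ∈ (0,1)` and `m₀, m₁ ∈ C`, one has `m₀ = m₁`. -/
def IsExtremeElem {X : Type*} [MeasurableSpace X] (C : Set (Measure X)) (m : Measure X) :
    Prop :=
  m ∈ C ∧ ∀ t : ℝ, t ∈ Set.Ioo (0 : ℝ) 1 → ∀ m₀ m₁ : Measure X, m₀ ∈ C → m₁ ∈ C →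
    m = ENNReal.ofReal (1 - t) • m₀ + ENNReal.ofReal t • m₁ → m₀ = m₁


lemma BddMeasurable.integrable {m : Measure X} [IsFiniteMeasure m] {f : X → ℝ}
    (hf : BddMeasurable f) : Integrable f m := by
  obtain ⟨hm, C, hC⟩ := hf
  exact (integrable_const C).mono' hm.aestronglyMeasurable
    (Filter.Eventually.of_forall fun x => by simpa using hC x)

lemma BddMeasurable.mul {f g : X → ℝ} (hf : BddMeasurable f) (hg : BddMeasurable g) :
    BddMeasurable (fun x => f x * g x) := by
  obtain ⟨hmf, C, hC⟩ := hf; obtain ⟨hmg, D, hD⟩ := hg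
  refine ⟨hmf.mul hmg, C * D, fun x => ?_⟩
  rw [abs_mul]
  exact mul_le_mul (hC x) (hD x) (abs_nonneg _) ((abs_nonneg _).trans (hC x))

lemma Tker_measurable (κ : Kernel X X) [IsSFiniteKernel κ] {f : X → ℝ}
    (hf : Measurable f) : Measurable (Tker κ f) := by
  have : StronglyMeasurable fun x => ∫ y, f y ∂(κ x) :=
    MeasureTheory.StronglyMeasurable.integral_kernel_prod_right
      (f := fun _ y => f y) ((hf.comp measurable_snd).stronglyMeasurable)
  exact this.measurable

lemma Tker_bdd (κ : Kernel X X) [IsFiniteKernel κ] (hκ : ∀ x, κ x Set.univ ≤ 1)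
    {f : X → ℝ} (hf : BddMeasurable f) : BddMeasurable (Tker κ f) := by
  obtain ⟨hm, C, hC⟩ := hf
  refine ⟨Tker_measurable κ hm, max C 0, fun x => ?_⟩
  have h1 : (κ x Set.univ).toReal ≤ 1 := by
    simpa using ENNReal.toReal_mono (by simp) (hκ x)
  calc |Tker κ f x| ≤ ∫ y, |f y| ∂(κ x) := by
        simpa [Tker, Real.norm_eq_abs] using norm_integral_le_integral_norm (μ := κ x) f
    _ ≤ ∫ _, max C 0 ∂(κ x) := by
        refine integral_mono ?_ (integrable_const _) fun y => (hC y).trans (le_max_left _ _)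
        exact ((integrable_const C).mono' hm.abs.aestronglyMeasurable
          (Filter.Eventually.of_forall fun y => by simpa [abs_abs] using hC y))
    _ = (κ x Set.univ).toReal * max C 0 := by simp [mul_comm, measureReal_def]
    _ ≤ max C 0 := by
        nlinarith [ENNReal.toReal_nonneg (a := κ x Set.univ), le_max_right C (0:ℝ)]

/-- Lemma 8: the four conditions (a), (b), (c), (d) are equivalent. -/
theorem lemma8_tfae
    (κ : Kernel X X) [IsFiniteKernel κ] (hκ : ∀ x, κ x Set.univ ≤ 1)
    (m : Measure X) [IsProbabilityMeasure m]
    (hcon : IsConservativeMeas κ m) (hrev : IsReversibleMeas κ m)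
    (f : X → ℝ) (hf : BddMeasurable f) :
    [ (∀ g : X → ℝ, BddMeasurable g →
        ∀ᵐ x ∂m, Tker κ (fun y => g y * f y) x = Tker κ g x * f x),
      (∀ᵐ x ∂m, Tker κ f x = f x),
      (∫ x, (f x - Tker κ f x) * f x ∂m = 0),
      (∀ᵐ p : X × X ∂(m.compProd κ), f p.1 = f p.2) ].TFAE := by
  obtain ⟨hfm, C, hfC⟩ := id hf
  have hT1le : ∀ x, (κ x Set.univ).toReal ≤ 1 := fun x => by
    simpa using ENNReal.toReal_mono (by simp) (hκ x)
  have hT1meas : Measurable fun x => (κ x Set.univ).toReal :=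
    (κ.measurable_coe MeasurableSet.univ).ennreal_toReal
  have hT1bdd : BddMeasurable fun x => (κ x Set.univ).toReal :=
    ⟨hT1meas, 1, fun x => by rw [abs_of_nonneg ENNReal.toReal_nonneg]; exact hT1le x⟩
  have hone : BddMeasurable (fun _ : X => (1:ℝ)) := ⟨measurable_const, 1, by simp⟩
  have hTone : ∀ x, Tker κ (fun _ => (1:ℝ)) x = (κ x Set.univ).toReal := fun x => by
    simp [Tker, measureReal_def]
  have hTf := Tker_bdd κ hκ hf
  have hff : BddMeasurable (fun y => f y * f y) := hf.mul hf
  -- T1 = 1 a.e.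
  have hT1ae : ∀ᵐ x ∂m, (κ x Set.univ).toReal = 1 := by
    have hc1 := hcon (fun _ => 1) hone
    simp only [mul_one] at hc1
    have hint : ∫ x, (1 - (κ x Set.univ).toReal) ∂m = 0 := by
      rw [integral_sub (integrable_const 1) hT1bdd.integrable, hc1, sub_self]
    have hnn : 0 ≤ᵐ[m] fun x => 1 - (κ x Set.univ).toReal :=
      Filter.Eventually.of_forall fun x => by
        simp only [Pi.zero_apply]; linarith [hT1le x]
    have := (integral_eq_zero_iff_of_nonneg_ae hnn
      ((integrable_const 1).sub hT1bdd.integrable)).mp hint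
    filter_upwards [this] with x hx
    have : 1 - (κ x Set.univ).toReal = 0 := hx
    linarith
  -- invariance
  have hinv : ∀ h : X → ℝ, BddMeasurable h → ∫ x, Tker κ h x ∂m = ∫ x, h x ∂m := by
    intro h hh
    have h1 := hrev h (fun _ => 1) hh hone
    simp only [mul_one] at h1
    rw [h1]
    calc ∫ x, h x * Tker κ (fun _ => (1:ℝ)) x ∂m
        = ∫ x, (κ x Set.univ).toReal * h x ∂m := by
          congr 1; funext x; rw [hTone x, mul_comm]
      _ = ∫ x, h x ∂m := hcon h hh
  tfae_have 1 → 2 := by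
    intro h1
    filter_upwards [h1 (fun _ => 1) hone, hT1ae] with x hx h1x
    simp only [one_mul] at hx
    rw [hx, hTone x, h1x, one_mul]
  tfae_have 2 → 3 := by
    intro h2
    have : (fun x => (f x - Tker κ f x) * f x) =ᵐ[m] fun _ => (0:ℝ) := by
      filter_upwards [h2] with x hx; rw [hx]; ring
    rw [integral_congr_ae this, integral_zero]
  tfae_have 3 → 4 := by
    intro h3
    set F : X × X → ℝ := fun p => (f p.1 - f p.2)^2 with hFdef
    have hFmeas : Measurable F :=
      ((hfm.comp measurable_fst).sub (hfm.comp measurable_snd)).pow_const 2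
    have hFint : Integrable F (m.compProd κ) := by
      refine (integrable_const ((2*(|C|+1))^2)).mono' hFmeas.aestronglyMeasurable
        (Filter.Eventually.of_forall fun p => ?_)
      have h1 := abs_le.mp (hfC p.1)
      have h2 := abs_le.mp (hfC p.2)
      have hC1 : C ≤ |C| := le_abs_self C
      simp only [hFdef, Real.norm_eq_abs]
      rw [abs_of_nonneg (sq_nonneg _)]
      nlinarith [abs_nonneg C]
    have inner : ∀ x, ∫ y, F (x, y) ∂(κ x) =
        f x * f x * (κ x Set.univ).toReal - 2 * f x * Tker κ f x
          + Tker κ (fun y => f y * f y) x := by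
      intro x
      have e1 : ∀ y, F (x, y) = (f x * f x - (2 * f x) * f y) + f y * f y := by
        intro y; simp only [hFdef]; ring
      simp_rw [e1]
      have ia : Integrable (fun y => f x * f x - 2 * f x * f y) (κ x) :=
        (integrable_const _).sub (hf.integrable.const_mul _)
      have ib : Integrable (fun y => (2 : ℝ) * f x * f y) (κ x) :=
        hf.integrable.const_mul _
      rw [integral_add ia hff.integrable,
        integral_sub (integrable_const _) ib,
        integral_const_mul (2 * f x) f, integral_const]
      simp only [Tker, smul_eq_mul, measureReal_def]
      ring
    have key : ∫ p, F p ∂(m.compProd κ) = 2 * ∫ x, (f x - Tker κ f x) * f x ∂m := by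
      rw [Measure.integral_compProd hFint]
      have : ∀ x, ∫ y, F (x, y) ∂(κ x) =
          (f x * f x * (κ x Set.univ).toReal - 2 * f x * Tker κ f x)
            + Tker κ (fun y => f y * f y) x := fun x => by rw [inner x]
      rw [integral_congr_ae (Filter.Eventually.of_forall this)]
      have i1 : Integrable (fun x => f x * f x * (κ x Set.univ).toReal) m :=
        (hff.mul hT1bdd).integrable
      have i2 : Integrable (fun x => 2 * f x * Tker κ f x) m := by
        have : Integrable (fun x => f x * Tker κ f x) m := (hf.mul hTf).integrable
        simpa [mul_assoc] using this.const_mul 2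
      have i3 : Integrable (Tker κ (fun y => f y * f y)) m :=
        (Tker_bdd κ hκ hff).integrable
      have i12 : Integrable
          (fun x => f x * f x * (κ x Set.univ).toReal - 2 * f x * Tker κ f x) m := i1.sub i2
      rw [integral_add i12 i3, integral_sub i1 i2]
      have e2 : ∫ x, f x * f x * (κ x Set.univ).toReal ∂m = ∫ x, f x * f x ∂m := by
        rw [show (fun x => f x * f x * (κ x Set.univ).toReal)
            = fun x => (κ x Set.univ).toReal * (f x * f x) by funext x; ring]
        exact hcon _ hff
      have e3 : ∫ x, Tker κ (fun y => f y * f y) x ∂m = ∫ x, f x * f x ∂m :=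
        hinv _ hff
      have e4 : ∫ x, 2 * f x * Tker κ f x ∂m = 2 * ∫ x, Tker κ f x * f x ∂m := by
        rw [show (fun x => 2 * f x * Tker κ f x)
            = fun x => 2 * (Tker κ f x * f x) by funext x; ring]
        exact integral_const_mul 2 _
      have e5 : ∫ x, (f x - Tker κ f x) * f x ∂m
          = ∫ x, f x * f x ∂m - ∫ x, Tker κ f x * f x ∂m := by
        rw [show (fun x => (f x - Tker κ f x) * f x)
            = fun x => f x * f x - Tker κ f x * f x by funext x; ring]
        exact integral_sub hff.integrable (hTf.mul hf).integrable
      rw [e2, e3, e4, e5]; ring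
    have hFzero : ∫ p, F p ∂(m.compProd κ) = 0 := by rw [key, h3, mul_zero]
    have hFae : F =ᵐ[m.compProd κ] 0 :=
      (integral_eq_zero_iff_of_nonneg (fun p => sq_nonneg _) hFint).mp hFzero
    filter_upwards [hFae] with p hp
    have : (f p.1 - f p.2)^2 = 0 := hp
    have := (pow_eq_zero_iff two_ne_zero).mp this
    linarith [sub_eq_zero.mp this]
  tfae_have 4 → 1 := by
    intro h4 g hg
    have h4' := Measure.ae_ae_of_ae_compProd h4
    filter_upwards [h4'] with x hx
    have : ∫ y, g y * f y ∂(κ x) = ∫ y, g y * f x ∂(κ x) :=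
      integral_congr_ae (by filter_upwards [hx] with y hy; rw [← hy])
    simp only [Tker]
    rw [this, integral_mul_const]
  tfae_finish
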